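/- Let n ≥ 4 be even and 2k < n. The replicator dynamics generated by the skip-vertex graph Sk(n,k) have a fixed point in the interior of the simplex Δ_{n−1}. Specifically, for any α with 1/(n−k) < α < 2/n and β = (nα − 2)/(2k − n), the vector v = α v_1 + β v_2 (with v_1, v_2 the kernel vectors of the skip-graph matrix) has strictly positive entries summing to 1 and satisfies A v = 0. -/

import Mathlib

/-- The skew-symmetric interaction matrix of the skip-vertex graph `Sk(n,k)`:
the directed `n`-cycle together with the skip edges `(2i−1, 2i+1)` for `i = 1,…,k`
(written here with 0-based indices: cycle edges `(i, i+1 mod n)` and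
skip edges `(2l, 2l+2)` for `l < k`). -/
def skA (n k : ℕ) : Matrix (Fin n) (Fin n) ℝ :=
  Matrix.of fun i j =>
    (if (j : ℕ) = ((i : ℕ) + 1) % n then (-1 : ℝ) else 0)
    + (if (i : ℕ) = ((j : ℕ) + 1) % n then 1 else 0)
    + (if (i : ℕ) % 2 = 0 ∧ (i : ℕ) < 2 * k ∧ (j : ℕ) = (i : ℕ) + 2 then -1 else 0)
    + (if (j : ℕ) % 2 = 0 ∧ (j : ℕ) < 2 * k ∧ (i : ℕ) = (j : ℕ) + 2 then 1 else 0)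

lemma pick_sum {n : ℕ} (v : Fin n → ℝ) (c : ℝ) (p : ℕ) (hp : p < n) :
    ∑ j : Fin n, (if (j : ℕ) = p then c else 0) * v j = c * v ⟨p, hp⟩ := by
  rw [Finset.sum_eq_single (⟨p, hp⟩ : Fin n)]
  · simp
  · intro b _ hb
    rw [if_neg fun h => hb (Fin.ext h), zero_mul]
  · intro h; exact absurd (Finset.mem_univ _) h

lemma mod_succ_eq (b n : ℕ) (hb : b < n) :
    (b + 1) % n = if b + 1 = n then 0 else b + 1 := by
  split_ifs with h
  · rw [h, Nat.mod_self]
  · exact Nat.mod_eq_of_lt (by omega)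

lemma sum_two {n : ℕ} (v : Fin n → ℝ) (c1 c2 : ℝ) (p1 p2 : ℕ)
    (h1 : p1 < n) (h2 : p2 < n) (f : Fin n → ℝ)
    (hf : ∀ j : Fin n, f j =
      (if (j : ℕ) = p1 then c1 else 0) + (if (j : ℕ) = p2 then c2 else 0)) :
    ∑ j : Fin n, f j * v j = c1 * v ⟨p1, h1⟩ + c2 * v ⟨p2, h2⟩ := by
  have h : ∀ j : Fin n, f j * v j =
      (if (j : ℕ) = p1 then c1 else 0) * v j + (if (j : ℕ) = p2 then c2 else 0) * v j :=
    fun j => by rw [hf]; ring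
  rw [Finset.sum_congr rfl fun j _ => h j, Finset.sum_add_distrib,
    pick_sum v c1 p1 h1, pick_sum v c2 p2 h2]

lemma sum_three {n : ℕ} (v : Fin n → ℝ) (c1 c2 c3 : ℝ) (p1 p2 p3 : ℕ)
    (h1 : p1 < n) (h2 : p2 < n) (h3 : p3 < n) (f : Fin n → ℝ)
    (hf : ∀ j : Fin n, f j =
      (if (j : ℕ) = p1 then c1 else 0) + (if (j : ℕ) = p2 then c2 else 0)
      + (if (j : ℕ) = p3 then c3 else 0)) :
    ∑ j : Fin n, f j * v j = c1 * v ⟨p1, h1⟩ + c2 * v ⟨p2, h2⟩ + c3 * v ⟨p3, h3⟩ := by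
  have h : ∀ j : Fin n, f j * v j =
      (if (j : ℕ) = p1 then c1 else 0) * v j + (if (j : ℕ) = p2 then c2 else 0) * v j
      + (if (j : ℕ) = p3 then c3 else 0) * v j :=
    fun j => by rw [hf]; ring
  rw [Finset.sum_congr rfl fun j _ => h j, Finset.sum_add_distrib, Finset.sum_add_distrib,
    pick_sum v c1 p1 h1, pick_sum v c2 p2 h2, pick_sum v c3 p3 h3]

lemma sum_four {n : ℕ} (v : Fin n → ℝ) (c1 c2 c3 c4 : ℝ) (p1 p2 p3 p4 : ℕ)
    (h1 : p1 < n) (h2 : p2 < n) (h3 : p3 < n) (h4 : p4 < n) (f : Fin n → ℝ)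
    (hf : ∀ j : Fin n, f j =
      (if (j : ℕ) = p1 then c1 else 0) + (if (j : ℕ) = p2 then c2 else 0)
      + (if (j : ℕ) = p3 then c3 else 0) + (if (j : ℕ) = p4 then c4 else 0)) :
    ∑ j : Fin n, f j * v j =
      c1 * v ⟨p1, h1⟩ + c2 * v ⟨p2, h2⟩ + c3 * v ⟨p3, h3⟩ + c4 * v ⟨p4, h4⟩ := by
  have h : ∀ j : Fin n, f j * v j =
      (if (j : ℕ) = p1 then c1 else 0) * v j + (if (j : ℕ) = p2 then c2 else 0) * v j
      + (if (j : ℕ) = p3 then c3 else 0) * v j + (if (j : ℕ) = p4 then c4 else 0) * v j :=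
    fun j => by rw [hf]; ring
  rw [Finset.sum_congr rfl fun j _ => h j, Finset.sum_add_distrib, Finset.sum_add_distrib,
    Finset.sum_add_distrib, pick_sum v c1 p1 h1, pick_sum v c2 p2 h2, pick_sum v c3 p3 h3,
    pick_sum v c4 p4 h4]

set_option maxHeartbeats 2000000 in
theorem stmt_10 (n k : ℕ) (hn : 4 ≤ n) (hev : Even n) (hk : 2 * k < n)
    (v1 v2 : Fin n → ℝ)
    (hv1 : ∀ i, v1 i = if (i : ℕ) % 2 = 1 then 1 else 0)
    (hv2 : ∀ i, v2 i = if (i : ℕ) % 2 = 0 then 1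
      else if (i : ℕ) < 2 * k then -1 else 0)
    (α : ℝ) (hα1 : 1 / ((n : ℝ) - (k : ℝ)) < α) (hα2 : α < 2 / (n : ℝ))
    (β : ℝ) (hβ : β = ((n : ℝ) * α - 2) / (2 * (k : ℝ) - (n : ℝ)))
    (v : Fin n → ℝ) (hv : ∀ i, v i = α * v1 i + β * v2 i) :
    (∀ i, 0 < v i) ∧ (∑ i, v i) = 1 ∧ (skA n k).mulVec v = 0 := by
  have hn2 : n % 2 = 0 := Nat.even_iff.mp hev
  have hkRlt : (2 : ℝ) * k < n := by exact_mod_cast hk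
  have hkRlt' : (k : ℝ) < n := by
    have : k < n := by omega
    exact_mod_cast this
  have hnR : (0 : ℝ) < n := by positivity
  have hnk : (0 : ℝ) < (n : ℝ) - k := by linarith
  have h1 : 1 < α * ((n : ℝ) - k) := (div_lt_iff₀ hnk).mp hα1
  have h2 : α * n < 2 := (lt_div_iff₀ hnR).mp hα2
  have hαpos : 0 < α := by nlinarith
  have hβpos : 0 < β := by
    rw [hβ, div_pos_iff]
    right
    constructor <;> nlinarith
  have hαβ : 0 < α - β := by
    rw [hβ, sub_pos, div_lt_iff_of_neg (by linarith : 2 * (k : ℝ) - n < 0)]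
    nlinarith
  -- value lemmas
  have wE : ∀ (p : ℕ) (hp : p < n), p % 2 = 0 → v ⟨p, hp⟩ = β := by
    intro p hp h
    rw [hv, hv1, hv2]
    simp only [Fin.val_mk]
    rw [if_neg (by omega), if_pos h]; ring
  have wO1 : ∀ (p : ℕ) (hp : p < n), p % 2 = 1 → p < 2 * k → v ⟨p, hp⟩ = α - β := by
    intro p hp h h'
    rw [hv, hv1, hv2]
    simp only [Fin.val_mk]
    rw [if_pos h, if_neg (by omega), if_pos h']; ring
  have wO2 : ∀ (p : ℕ) (hp : p < n), p % 2 = 1 → ¬ p < 2 * k → v ⟨p, hp⟩ = α := by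
    intro p hp h h'
    rw [hv, hv1, hv2]
    simp only [Fin.val_mk]
    rw [if_pos h, if_neg (by omega), if_neg h']; ring
  refine ⟨?_, ?_, ?_⟩
  · -- positivity
    intro i
    rw [hv, hv1, hv2]
    split_ifs <;> first | nlinarith | (exfalso; omega)
  · -- sum equals one
    obtain ⟨m, hm⟩ := hev
    have hnm : n = 2 * m := by omega
    have sumAux : ∀ M : ℕ, ∑ p ∈ Finset.range (2 * M),
        (α * (if p % 2 = 1 then (1 : ℝ) else 0)
          + β * (if p % 2 = 0 then 1 else if p < 2 * k then -1 else 0))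
        = α * M + β * ((M : ℝ) - min k M) := by
      intro M
      induction M with
      | zero => simp
      | succ M ih =>
        rw [show 2 * (M + 1) = 2 * M + 1 + 1 by omega, Finset.sum_range_succ,
          Finset.sum_range_succ, ih]
        rw [if_neg (by omega : ¬ (2 * M) % 2 = 1), if_pos (by omega : (2 * M) % 2 = 0),
          if_pos (by omega : (2 * M + 1) % 2 = 1), if_neg (by omega : ¬ (2 * M + 1) % 2 = 0)]
        by_cases hkM : k ≤ M
        · rw [if_neg (by omega : ¬ 2 * M + 1 < 2 * k), min_eq_left hkM,
            min_eq_left (by omega : k ≤ M + 1)]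
          push_cast; ring
        · rw [if_pos (by omega : 2 * M + 1 < 2 * k), min_eq_right (by omega : M ≤ k),
            min_eq_right (by omega : M + 1 ≤ k)]
          push_cast; ring
    have hcalc : ∑ i, v i = α * m + β * ((m : ℝ) - k) := by
      calc ∑ i, v i
          = ∑ p ∈ Finset.range n, (α * (if p % 2 = 1 then (1 : ℝ) else 0)
            + β * (if p % 2 = 0 then 1 else if p < 2 * k then -1 else 0)) := by
            rw [← Fin.sum_univ_eq_sum_range]
            exact Finset.sum_congr rfl fun i _ => by rw [hv, hv1, hv2]
        _ = α * m + β * ((m : ℝ) - k) := by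
            rw [hnm, sumAux m, min_eq_left (by omega : k ≤ m)]
    rw [hcalc, hβ]
    have hmR : (n : ℝ) = 2 * m := by exact_mod_cast hnm
    have hkm : k < m := by omega
    have hne : 2 * (k : ℝ) - (n : ℝ) ≠ 0 := by
      intro h; nlinarith
    rw [hmR] at hne ⊢
    have hne' : (k : ℝ) - m ≠ 0 := fun h => hne (by linarith)
    field_simp [hne']
    ring
  · -- kernel
    funext i
    have hi : (i : ℕ) < n := i.isLt
    show ∑ j, skA n k i j * v j = 0
    by_cases hodd : (i : ℕ) % 2 = 1
    · by_cases hw : (i : ℕ) = n - 1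
      · have key : ∀ j : Fin n, skA n k i j =
            (if (j : ℕ) = 0 then (-1 : ℝ) else 0)
            + (if (j : ℕ) = (i : ℕ) - 1 then (1 : ℝ) else 0) := by
          intro j
          have hj : (j : ℕ) < n := j.isLt
          simp only [skA, Matrix.of_apply]
          rw [show ((i : ℕ) + 1) % n = 0 by
            rw [show (i : ℕ) + 1 = n by omega]; exact Nat.mod_self n]
          rw [mod_succ_eq _ n hj]
          split_ifs <;> first | (exfalso; omega) | norm_num
        have hs := sum_two v (-1) 1 0 ((i : ℕ) - 1) (by omega) (by omega) (skA n k i) key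
        rw [hs, wE 0 (by omega) (by omega), wE ((i : ℕ) - 1) (by omega) (by omega)]
        ring
      · have key : ∀ j : Fin n, skA n k i j =
            (if (j : ℕ) = (i : ℕ) + 1 then (-1 : ℝ) else 0)
            + (if (j : ℕ) = (i : ℕ) - 1 then (1 : ℝ) else 0) := by
          intro j
          have hj : (j : ℕ) < n := j.isLt
          simp only [skA, Matrix.of_apply]
          rw [Nat.mod_eq_of_lt (show (i : ℕ) + 1 < n by omega)]
          rw [mod_succ_eq _ n hj]
          split_ifs <;> first | (exfalso; omega) | norm_num
        have hs := sum_two v (-1) 1 ((i : ℕ) + 1) ((i : ℕ) - 1) (by omega) (by omega) (skA n k i) key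
        rw [hs, wE ((i : ℕ) + 1) (by omega) (by omega), wE ((i : ℕ) - 1) (by omega) (by omega)]
        ring
    · have he : (i : ℕ) % 2 = 0 := by omega
      by_cases h0 : (i : ℕ) = 0
      · by_cases hk0 : k = 0
        · have key : ∀ j : Fin n, skA n k i j =
              (if (j : ℕ) = 1 then (-1 : ℝ) else 0)
              + (if (j : ℕ) = n - 1 then (1 : ℝ) else 0) := by
            intro j
            have hj : (j : ℕ) < n := j.isLt
            simp only [skA, Matrix.of_apply]
            rw [Nat.mod_eq_of_lt (show (i : ℕ) + 1 < n by omega)]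
            rw [mod_succ_eq _ n hj]
            split_ifs <;> first | (exfalso; omega) | norm_num
          have hs := sum_two v (-1) 1 1 (n - 1) (by omega) (by omega) (skA n k i) key
          rw [hs, wO2 1 (by omega) (by omega) (by omega), wO2 (n - 1) (by omega) (by omega) (by omega)]
          ring
        · have key : ∀ j : Fin n, skA n k i j =
              (if (j : ℕ) = 1 then (-1 : ℝ) else 0)
              + (if (j : ℕ) = n - 1 then (1 : ℝ) else 0)
              + (if (j : ℕ) = 2 then (-1 : ℝ) else 0) := by
            intro j
            have hj : (j : ℕ) < n := j.isLt
            simp only [skA, Matrix.of_apply]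
            rw [Nat.mod_eq_of_lt (show (i : ℕ) + 1 < n by omega)]
            rw [mod_succ_eq _ n hj]
            split_ifs <;> first | (exfalso; omega) | norm_num
          have hs := sum_three v (-1) 1 (-1) 1 (n - 1) 2 (by omega) (by omega) (by omega) (skA n k i) key
          rw [hs, wO1 1 (by omega) (by omega) (by omega), wO2 (n - 1) (by omega) (by omega) (by omega),
            wE 2 (by omega) (by omega)]
          ring
      · -- i even, i ≥ 2
        by_cases hlt : (i : ℕ) < 2 * k
        · have key : ∀ j : Fin n, skA n k i j =
              (if (j : ℕ) = (i : ℕ) + 1 then (-1 : ℝ) else 0)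
              + (if (j : ℕ) = (i : ℕ) - 1 then (1 : ℝ) else 0)
              + (if (j : ℕ) = (i : ℕ) + 2 then (-1 : ℝ) else 0)
              + (if (j : ℕ) = (i : ℕ) - 2 then (1 : ℝ) else 0) := by
            intro j
            have hj : (j : ℕ) < n := j.isLt
            simp only [skA, Matrix.of_apply]
            rw [Nat.mod_eq_of_lt (show (i : ℕ) + 1 < n by omega)]
            rw [mod_succ_eq _ n hj]
            split_ifs <;> first | (exfalso; omega) | norm_num
          have hs := sum_four v (-1) 1 (-1) 1 ((i : ℕ) + 1) ((i : ℕ) - 1) ((i : ℕ) + 2)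
            ((i : ℕ) - 2) (by omega) (by omega) (by omega) (by omega) (skA n k i) key
          rw [hs, wO1 ((i : ℕ) + 1) (by omega) (by omega) (by omega),
            wO1 ((i : ℕ) - 1) (by omega) (by omega) (by omega),
            wE ((i : ℕ) + 2) (by omega) (by omega), wE ((i : ℕ) - 2) (by omega) (by omega)]
          ring
        · by_cases heq : (i : ℕ) = 2 * k
          · have key : ∀ j : Fin n, skA n k i j =
                (if (j : ℕ) = (i : ℕ) + 1 then (-1 : ℝ) else 0)
                + (if (j : ℕ) = (i : ℕ) - 1 then (1 : ℝ) else 0)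
                + (if (j : ℕ) = (i : ℕ) - 2 then (1 : ℝ) else 0) := by
              intro j
              have hj : (j : ℕ) < n := j.isLt
              simp only [skA, Matrix.of_apply]
              rw [Nat.mod_eq_of_lt (show (i : ℕ) + 1 < n by omega)]
              rw [mod_succ_eq _ n hj]
              split_ifs <;> first | (exfalso; omega) | norm_num
            have hs := sum_three v (-1) 1 1 ((i : ℕ) + 1) ((i : ℕ) - 1) ((i : ℕ) - 2)
              (by omega) (by omega) (by omega) (skA n k i) key
            rw [hs, wO2 ((i : ℕ) + 1) (by omega) (by omega) (by omega),
              wO1 ((i : ℕ) - 1) (by omega) (by omega) (by omega),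
              wE ((i : ℕ) - 2) (by omega) (by omega)]
            ring
          · have key : ∀ j : Fin n, skA n k i j =
                (if (j : ℕ) = (i : ℕ) + 1 then (-1 : ℝ) else 0)
                + (if (j : ℕ) = (i : ℕ) - 1 then (1 : ℝ) else 0) := by
              intro j
              have hj : (j : ℕ) < n := j.isLt
              simp only [skA, Matrix.of_apply]
              rw [Nat.mod_eq_of_lt (show (i : ℕ) + 1 < n by omega)]
              rw [mod_succ_eq _ n hj]
              split_ifs <;> first | (exfalso; omega) | norm_num
            have hs := sum_two v (-1) 1 ((i : ℕ) + 1) ((i : ℕ) - 1)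
              (by omega) (by omega) (skA n k i) key
            rw [hs, wO2 ((i : ℕ) + 1) (by omega) (by omega) (by omega),
              wO2 ((i : ℕ) - 1) (by omega) (by omega) (by omega)]
            ring
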